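/- Let a be a real number with 1/√3 < a < √3 and let k > (9/64)(a + 1/a)². Then there exists a nonconstant periodic differentiable solution (M₁, M₂, M₃) : ℝ → ℝ³ of the reduced Fefferman equations with P = 1, i.e. M₁' = -M₂(M₃/a + 3/2), M₂' = M₁(a·M₃ + 3/2), M₃' = (1/a - a)·M₁·M₂, which satisfies H_a(M₁(t), M₂(t), M₃(t), 1) = 0 and M₁(t)² + M₂(t)² + M₃(t)² = k for all t. -/

import Mathlib

set_option linter.unusedSectionVars false

open Real

noncomputable section

def FefSol (a k : ℝ) : Prop :=
  ∃ (M₁ M₂ M₃ : ℝ → ℝ) (T : ℝ), 0 < T ∧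
    (∀ t, HasDerivAt M₁ (-(M₂ t) * (M₃ t / a + 3/2)) t) ∧
    (∀ t, HasDerivAt M₂ (M₁ t * (a * M₃ t + 3/2)) t) ∧
    (∀ t, HasDerivAt M₃ ((1/a - a) * M₁ t * M₂ t) t) ∧
    (∃ t s : ℝ, (M₁ t, M₂ t, M₃ t) ≠ (M₁ s, M₂ s, M₃ s)) ∧
    (∀ t, M₁ (t + T) = M₁ t ∧ M₂ (t + T) = M₂ t ∧ M₃ (t + T) = M₃ t) ∧
    (∀ t, (1/2) * (a * M₁ t ^ 2 + (1/a) * M₂ t ^ 2 - 3 * M₃ t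
      - (9/8) * (a + 1/a)) = 0) ∧
    (∀ t, M₁ t ^ 2 + M₂ t ^ 2 + M₃ t ^ 2 = k)

namespace Fef

variable (a k : ℝ)

def cc : ℝ := 9/8*(a+1/a)
def q1 : ℝ := Real.sqrt (9*a^2 - 4*a*(cc a) + 4*k)
def q2 : ℝ := Real.sqrt (9 - 4*a*(cc a) + 4*a^2*k)
def rr : ℝ := (-(3*a) + q1 a k)/2
def r1 : ℝ := (-(3*a) - q1 a k)/2
def ss : ℝ := (-3 + q2 a k)/(2*a)
def r2 : ℝ := (-3 - q2 a k)/(2*a)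
def m : ℝ := (rr a k + ss a k)/2
def d : ℝ := (ss a k - rr a k)/2
def al : ℝ := 2 * d a k/(a^2-1)
def u (x : ℝ) : ℝ := m a k - d a k * Real.cos x
def A (x : ℝ) : ℝ := Real.sqrt (al a k * (u a k x - r1 a k))
def B (x : ℝ) : ℝ := Real.sqrt (a^2 * al a k * (u a k x - r2 a k))
def Fc (x : ℝ) : ℝ := Real.sqrt ((u a k x - r1 a k) * (u a k x - r2 a k))

variable {a k : ℝ} (ha : 1 < a) (hk : (9/64) * (a + 1/a) ^ 2 < k)

section basic
include ha hk

lemma ha0 : (0:ℝ) < a := lt_trans one_pos ha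
lemma ha2 : (0:ℝ) < a^2 - 1 := by nlinarith
lemma hk0 : (0:ℝ) < k := lt_of_le_of_lt (by positivity) hk

lemma hD1 : 0 < 9*a^2 - 4*a*(cc a) + 4*k := by
  have h0 : (0:ℝ) < a := ha0 ha hk
  have e : 9*a^2 - 4*a*(cc a) + 4*k = (9/2)*(a^2-1) + 4*k := by
    unfold cc; linear_combination (-9/2:ℝ) * mul_one_div_cancel h0.ne'
  rw [e]
  have := hk0 ha hk
  nlinarith [ha2 ha hk]

lemma hD2 : 0 < 9 - 4*a*(cc a) + 4*a^2*k := by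
  have h0 : (0:ℝ) < a := ha0 ha hk
  have e : a^2 * ((9/64) * (a + 1/a) ^ 2) = (9/64)*(a^2+1)^2 := by
    field_simp
  have h2 : a^2 * ((9/64) * (a + 1/a) ^ 2) < a^2 * k :=
    mul_lt_mul_of_pos_left hk (by positivity)
  have e2 : 9 - 4*a*(cc a) + 4*a^2*k = (9/2)*(1-a^2) + 4*(a^2*k) := by
    unfold cc; linear_combination (-9/2:ℝ) * mul_one_div_cancel h0.ne'
  rw [e2, e] at *
  nlinarith [sq_nonneg (a^2-3)]

lemma hq1sq : (q1 a k)^2 = 9*a^2 - 4*a*(cc a) + 4*k := Real.sq_sqrt (hD1 ha hk).le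
lemma hq1pos : 0 < q1 a k := Real.sqrt_pos.2 (hD1 ha hk)
lemma hq2sq : (q2 a k)^2 = 9 - 4*a*(cc a) + 4*a^2*k := Real.sq_sqrt (hD2 ha hk).le
lemma hq2pos : 0 < q2 a k := Real.sqrt_pos.2 (hD2 ha hk)

lemma vr : rr a k + r1 a k = -(3*a) := by unfold rr r1; ring

lemma vp : rr a k * r1 a k = a * cc a - k := by
  have h := hq1sq ha hk
  unfold rr r1
  linear_combination (-(1:ℝ)/4) * h

lemma ws : a * (ss a k + r2 a k) = -3 := by
  have h0 := (ha0 ha hk).ne'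
  unfold ss r2; field_simp; ring

lemma wp : a * (ss a k * r2 a k) = cc a - a * k := by
  have h0 := (ha0 ha hk).ne'
  have h := hq2sq ha hk
  unfold ss r2
  field_simp
  linear_combination (-1) * h

end basic
section order
include ha hk

lemma hrm : rr a k = m a k - d a k := by unfold m d; ring
lemma hsm : ss a k = m a k + d a k := by unfold m d; ring

lemma hal : al a k * (a^2-1) = 2 * d a k := by
  have h := (ha2 ha hk).ne'
  unfold al; field_simp

lemma hr1r : r1 a k < rr a k := by
  have := hq1pos ha hk; unfold rr r1; linarith

lemma h3rc : 0 < 3 * rr a k + cc a := by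
  have h0 := (ha0 ha hk).ne'
  have e : 9*a^2 - 4*a*(cc a) + 4*k
      = ((3/4)*(3*a-1/a))^2 + 4*(k - (9/64)*(a+1/a)^2) := by
    unfold cc; ring
  have hb : ((3/4)*(3*a-1/a))^2 < (q1 a k)^2 := by
    rw [hq1sq ha hk, e]; linarith
  have hbpos : (0:ℝ) < (3/4)*(3*a-1/a) := by
    have : 1/a < 1 := by rw [div_lt_one (ha0 ha hk)]; exact ha
    linarith
  have hq : (3:ℝ)/4*(3*a-1/a) < q1 a k := by
    nlinarith [hq1pos ha hk]
  have e2 : 3*rr a k + cc a = 3/2*(q1 a k - 3/4*(3*a-1/a)) := by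
    unfold rr cc; field_simp; ring
  rw [e2]; linarith

lemma p1r : rr a k^2 + 3*a*rr a k + a*cc a - k = 0 := by
  linear_combination rr a k * (vr ha hk) - (vp ha hk)

lemma hsr2 : r2 a k < ss a k := by
  have h0 := ha0 ha hk
  have := hq2pos ha hk
  unfold ss r2
  rw [div_lt_div_iff₀ (by positivity) (by positivity)]
  nlinarith

lemma hP2r : a * ((rr a k - ss a k)*(rr a k - r2 a k)) = (1 - a^2)*(3*rr a k + cc a) := by
  linear_combination a * (p1r ha hk) - rr a k * (ws ha hk) + (wp ha hk)

lemma hprod : (rr a k - ss a k)*(rr a k - r2 a k) < 0 := by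
  have h1 := hP2r ha hk
  have h2 := h3rc ha hk
  have h3 := ha2 ha hk
  have h0 := ha0 ha hk
  nlinarith

lemma hrs : rr a k < ss a k := by
  have h1 := hprod ha hk
  have h2 := hsr2 ha hk
  by_contra h
  push_neg at h
  nlinarith

lemma hr2r : r2 a k < rr a k := by
  have h1 := hprod ha hk
  have h2 := hrs ha hk
  nlinarith

lemma hd0 : 0 < d a k := by
  have := hrs ha hk; unfold d; linarith

lemma hal0 : 0 < al a k := by
  have h1 := hd0 ha hk
  have h2 := ha2 ha hk
  unfold al; positivity

variable (x : ℝ)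

lemma hur : rr a k ≤ u a k x := by
  have h1 := hd0 ha hk
  have h2 := Real.cos_le_one x
  rw [hrm ha hk]; unfold u; nlinarith

lemma hus : u a k x ≤ ss a k := by
  have h1 := hd0 ha hk
  have h2 := Real.neg_one_le_cos x
  rw [hsm ha hk]; unfold u; nlinarith

lemma hur1 : 0 < u a k x - r1 a k := by
  have := hur ha hk x; have := hr1r ha hk; linarith

lemma hur2 : 0 < u a k x - r2 a k := by
  have := hur ha hk x; have := hr2r ha hk; linarith

lemma hApos : 0 < A a k x :=
  Real.sqrt_pos.2 (mul_pos (hal0 ha hk) (hur1 ha hk x))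

lemma hA2 : (A a k x)^2 = al a k * (u a k x - r1 a k) :=
  Real.sq_sqrt (mul_pos (hal0 ha hk) (hur1 ha hk x)).le

lemma hBpos : 0 < B a k x := by
  have h0 := ha0 ha hk
  exact Real.sqrt_pos.2 (mul_pos (mul_pos (by positivity) (hal0 ha hk)) (hur2 ha hk x))

lemma hB2 : (B a k x)^2 = a^2 * al a k * (u a k x - r2 a k) := by
  have h0 := ha0 ha hk
  exact Real.sq_sqrt (mul_pos (mul_pos (by positivity) (hal0 ha hk)) (hur2 ha hk x)).le

lemma hFpos : 0 < Fc a k x :=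
  Real.sqrt_pos.2 (mul_pos (hur1 ha hk x) (hur2 ha hk x))

lemma hF2 : (Fc a k x)^2 = (u a k x - r1 a k) * (u a k x - r2 a k) :=
  Real.sq_sqrt (mul_pos (hur1 ha hk x) (hur2 ha hk x)).le

lemma hABF : A a k x * B a k x = a * al a k * Fc a k x := by
  have h0 := ha0 ha hk
  have h1 := hur1 ha hk x
  have h2 := hur2 ha hk x
  have h3 := hal0 ha hk
  unfold A B Fc
  rw [← Real.sqrt_mul (by positivity)]
  rw [show (al a k*(u a k x - r1 a k))*(a^2*al a k*(u a k x - r2 a k))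
      = (a*al a k)^2 * ((u a k x - r1 a k)*(u a k x - r2 a k)) by ring]
  rw [Real.sqrt_mul (sq_nonneg _), Real.sqrt_sq (by positivity)]

end order

section identities
include ha hk
variable (x : ℝ)

lemma hcc : cc a = 9/8*(a+1/a) := rfl

lemma hsin2 : Real.sin x = 2 * Real.sin (x/2) * Real.cos (x/2) := by
  have h := Real.sin_two_mul (x/2)
  have h2 : 2*(x/2) = x := by ring
  rwa [h2] at h

lemma hcos2 : Real.cos x = 1 - 2 * Real.sin (x/2)^2 := by
  have h := Real.cos_two_mul (x/2)
  have h2 : 2*(x/2) = x := by ring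
  rw [h2] at h
  have h3 := Real.sin_sq_add_cos_sq (x/2)
  linarith

lemma hσd : 2*(Real.sin (x/2)^2 * d a k) = u a k x - rr a k := by
  have h1 : u a k x = m a k - d a k * Real.cos x := rfl
  rw [h1, hcos2 ha hk x, hrm ha hk]; ring

lemma hγd : 2*(Real.cos (x/2)^2 * d a k) = ss a k - u a k x := by
  have h1 : u a k x = m a k - d a k * Real.cos x := rfl
  have h3 := Real.sin_sq_add_cos_sq (x/2)
  rw [h1, hcos2 ha hk x, hsm ha hk]
  linear_combination (2*d a k)*h3

lemma c1 : -((Real.cos (x/2)*(1/2)) * A a k x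
      + Real.sin (x/2) * (1/(2*A a k x)*(al a k*(d a k*Real.sin x)))) * Fc a k x
    = -(Real.cos (x/2) * B a k x) * (u a k x / a + 3/2) := by
  have hAp := hApos ha hk x
  have hai : a * (1/a) = 1 := mul_one_div_cancel (ha0 ha hk).ne'
  have step1 : -((Real.cos (x/2)*(1/2)) * A a k x
      + Real.sin (x/2) * (1/(2*A a k x)*(al a k*(d a k*Real.sin x)))) * Fc a k x
      = -(Real.cos (x/2)*(A a k x^2*(1/2) + Real.sin (x/2)^2*(al a k*d a k))) * Fc a k x / A a k x := by
    rw [hsin2 ha hk x]; field_simp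
  rw [step1, hA2 ha hk x]
  rw [div_eq_iff hAp.ne']
  linear_combination (Real.cos (x/2)*(u a k x/a + 3/2))*(hABF ha hk x)
    + Real.cos (x/2)*(al a k)*(Fc a k x)*(u a k x)*hai
    + (-(Real.cos (x/2))*(Fc a k x)*(al a k/2))*(hσd ha hk x)
    + (Real.cos (x/2)*(Fc a k x)*(al a k/2))*(vr ha hk)

lemma c2 : ((-Real.sin (x/2)*(1/2)) * B a k x
      + Real.cos (x/2) * (1/(2*B a k x)*(a^2*al a k*(d a k*Real.sin x)))) * Fc a k x
    = -(Real.sin (x/2) * A a k x) * (a * u a k x + 3/2) := by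
  have hBp := hBpos ha hk x
  have step1 : ((-Real.sin (x/2)*(1/2)) * B a k x
      + Real.cos (x/2) * (1/(2*B a k x)*(a^2*al a k*(d a k*Real.sin x)))) * Fc a k x
      = (Real.sin (x/2)*(-(B a k x^2*(1/2)) + Real.cos (x/2)^2*(a^2*al a k*d a k))) * Fc a k x / B a k x := by
    rw [hsin2 ha hk x]; field_simp
  rw [step1, hB2 ha hk x]
  rw [div_eq_iff hBp.ne']
  linear_combination ((Real.sin (x/2))*(a*u a k x + 3/2))*(hABF ha hk x)
    + (Real.sin (x/2)*(Fc a k x)*(a^2*al a k/2))*(hγd ha hk x)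
    + (Real.sin (x/2)*(Fc a k x)*(al a k)*(a/2))*(ws ha hk)

lemma c3 : (d a k * Real.sin x) * Fc a k x
    = (1/a - a) * (-(Real.sin (x/2) * A a k x)) * (Real.cos (x/2) * B a k x) := by
  have hai : a * (1/a) = 1 := mul_one_div_cancel (ha0 ha hk).ne'
  rw [hsin2 ha hk x]
  linear_combination ((1/a - a)*Real.sin (x/2)*Real.cos (x/2))*(hABF ha hk x)
    + (Real.sin (x/2)*Real.cos (x/2)*(al a k)*(Fc a k x))*hai
    + (-(Real.sin (x/2)*Real.cos (x/2)*(Fc a k x)))*(hal ha hk)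

lemma c4 : (1/2)*(a*(-(Real.sin (x/2)*A a k x))^2 + (1/a)*(Real.cos (x/2)*B a k x)^2
      - 3*u a k x - 9/8*(a+1/a)) = 0 := by
  have hai : a * (1/a) = 1 := mul_one_div_cancel (ha0 ha hk).ne'
  have main : (a*(Real.sin (x/2)*A a k x)^2 + (1/a)*(Real.cos (x/2)*B a k x)^2
      - 3*u a k x - 9/8*(a+1/a)) * (2*(d a k)*(a^2-1)) = 0 := by
    linear_combination (a*(a^2-1)*2*(d a k)*Real.sin (x/2)^2)*(hA2 ha hk x)
      + (a*(a^2-1)*(al a k)*(u a k x - r1 a k))*(hσd ha hk x)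
      + (a*(u a k x - r1 a k)*(u a k x - rr a k))*(hal ha hk)
      + ((1/a)*(a^2-1)*2*(d a k)*Real.cos (x/2)^2)*(hB2 ha hk x)
      + ((1/a)*(a^2-1)*a^2*(al a k)*(u a k x - r2 a k))*(hγd ha hk x)
      + ((1/a)*a^2*(u a k x - r2 a k)*(ss a k - u a k x))*(hal ha hk)
      + (2*(d a k)*(u a k x - r2 a k)*(ss a k - u a k x))*hai
      + (2*(d a k)*(u a k x - r2 a k)*(u a k x - ss a k)*(1-a))*hai
      + (-2*(d a k)*a*(u a k x))*(vr ha hk)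
      + (2*(d a k)*a)*(vp ha hk)
      + (2*(d a k)*(u a k x))*(ws ha hk)
      + (-2*(d a k))*(wp ha hk)
      + (2*(d a k)*(a^2-1))*(hcc ha hk)
  have hne : (2*(d a k)*(a^2-1)) ≠ 0 := by
    have := hd0 ha hk; have := ha2 ha hk; positivity
  have h0 := mul_eq_zero.mp main
  rcases h0 with h0 | h0
  · linear_combination (1/2)*h0
  · exact absurd h0 hne

lemma c5 : (-(Real.sin (x/2)*A a k x))^2 + (Real.cos (x/2)*B a k x)^2 + (u a k x)^2 = k := by
  have hai : a * (1/a) = 1 := mul_one_div_cancel (ha0 ha hk).ne'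
  have main : ((Real.sin (x/2)*A a k x)^2 + (Real.cos (x/2)*B a k x)^2 + (u a k x)^2 - k)
      * (2*(d a k)*(a^2-1)) = 0 := by
    linear_combination ((a^2-1)*2*(d a k)*Real.sin (x/2)^2)*(hA2 ha hk x)
      + ((a^2-1)*(al a k)*(u a k x - r1 a k))*(hσd ha hk x)
      + ((u a k x - r1 a k)*(u a k x - rr a k))*(hal ha hk)
      + ((a^2-1)*2*(d a k)*Real.cos (x/2)^2)*(hB2 ha hk x)
      + ((a^2-1)*a^2*(al a k)*(u a k x - r2 a k))*(hγd ha hk x)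
      + (a^2*(u a k x - r2 a k)*(ss a k - u a k x))*(hal ha hk)
      + (-2*(d a k)*(u a k x))*(vr ha hk)
      + (2*(d a k))*(vp ha hk)
      + (2*(d a k)*a*(u a k x))*(ws ha hk)
      + (-2*(d a k)*a)*(wp ha hk)
      + (2*(d a k)*(a^2-1)*(u a k x)*0)*hai
  have hne : (2*(d a k)*(a^2-1)) ≠ 0 := by
    have := hd0 ha hk; have := ha2 ha hk; positivity
  have h0 := mul_eq_zero.mp main
  rcases h0 with h0 | h0
  · linear_combination h0
  · exact absurd h0 hne

end identities

def G (a k : ℝ) (t : ℝ) : ℝ := ∫ x in (0:ℝ)..t, (Fc a k x)⁻¹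

section analysis
include ha hk
variable (x : ℝ)

lemma dU : HasDerivAt (u a k) (d a k * Real.sin x) x := by
  have h : HasDerivAt (fun y => d a k * Real.cos y) (d a k * (-Real.sin x)) x :=
    (Real.hasDerivAt_cos x).const_mul (d a k)
  have h2 := (hasDerivAt_const x (m a k)).sub h
  exact h2.congr_deriv (by ring)

lemma dA : HasDerivAt (A a k) (1/(2*A a k x) * (al a k*(d a k*Real.sin x))) x := by
  have h1 : HasDerivAt (fun y => al a k * (u a k y - r1 a k)) (al a k*(d a k*Real.sin x)) x :=
    ((dU ha hk x).sub_const (r1 a k)).const_mul (al a k)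
  exact (Real.hasDerivAt_sqrt (mul_pos (hal0 ha hk) (hur1 ha hk x)).ne').comp x h1

lemma dB : HasDerivAt (B a k) (1/(2*B a k x) * (a^2*al a k*(d a k*Real.sin x))) x := by
  have h1 : HasDerivAt (fun y => a^2*al a k * (u a k y - r2 a k)) (a^2*al a k*(d a k*Real.sin x)) x :=
    ((dU ha hk x).sub_const (r2 a k)).const_mul (a^2*al a k)
  exact (Real.hasDerivAt_sqrt (mul_pos (mul_pos (by positivity) (hal0 ha hk))
    (hur2 ha hk x)).ne').comp x h1

lemma dsinh : HasDerivAt (fun y : ℝ => Real.sin (y/2)) (Real.cos (x/2)*(1/2)) x := by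
  exact (Real.hasDerivAt_sin (x/2)).comp x ((hasDerivAt_id x).div_const 2)

lemma dcosh : HasDerivAt (fun y : ℝ => Real.cos (y/2)) (-Real.sin (x/2)*(1/2)) x := by
  exact (Real.hasDerivAt_cos (x/2)).comp x ((hasDerivAt_id x).div_const 2)

lemma df1 : HasDerivAt (fun y => -(Real.sin (y/2) * A a k y))
    (-((Real.cos (x/2)*(1/2)) * A a k x
      + Real.sin (x/2) * (1/(2*A a k x)*(al a k*(d a k*Real.sin x))))) x :=
  ((dsinh ha hk x).mul (dA ha hk x)).neg

lemma df2 : HasDerivAt (fun y => Real.cos (y/2) * B a k y)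
    ((-Real.sin (x/2)*(1/2)) * B a k x
      + Real.cos (x/2) * (1/(2*B a k x)*(a^2*al a k*(d a k*Real.sin x)))) x :=
  (dcosh ha hk x).mul (dB ha hk x)

lemma Fc_cont : Continuous (Fc a k) := by
  apply Real.continuous_sqrt.comp
  have : Continuous (u a k) := by unfold u; fun_prop
  fun_prop

lemma Fcinv_cont : Continuous (fun x => (Fc a k x)⁻¹) :=
  (Fc_cont ha hk).inv₀ (fun x => (hFpos ha hk x).ne')

lemma b2pos : 0 < (ss a k - r1 a k)*(ss a k - r2 a k) := by
  have h1 := hr1r ha hk; have h2 := hrs ha hk; have h3 := hr2r ha hk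
  nlinarith

lemma Fc_le : Fc a k x ≤ Real.sqrt ((ss a k - r1 a k)*(ss a k - r2 a k)) := by
  apply Real.sqrt_le_sqrt
  have h1 := hur1 ha hk x; have h2 := hur2 ha hk x; have h3 := hus ha hk x
  nlinarith

lemma Fcinv_ge : (Real.sqrt ((ss a k - r1 a k)*(ss a k - r2 a k)))⁻¹ ≤ (Fc a k x)⁻¹ :=
  inv_anti₀ (hFpos ha hk x) (Fc_le ha hk x)

lemma G_hasDeriv : HasDerivAt (G a k) (Fc a k x)⁻¹ x := by
  apply intervalIntegral.integral_hasDerivAt_right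
    ((Fcinv_cont ha hk).intervalIntegrable 0 x)
    ((Fcinv_cont ha hk).stronglyMeasurableAtFilter _ _)
    (Fcinv_cont ha hk).continuousAt

lemma G_mono : StrictMono (G a k) := by
  apply strictMono_of_deriv_pos
  intro t
  rw [(G_hasDeriv ha hk t).deriv]
  exact inv_pos.2 (hFpos ha hk t)

lemma G_cont : Continuous (G a k) :=
  continuous_iff_continuousAt.2 (fun t => (G_hasDeriv ha hk t).continuousAt)

lemma G_zero : G a k 0 = 0 := intervalIntegral.integral_same

lemma G_ge (t : ℝ) (ht : 0 ≤ t) :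
    t * (Real.sqrt ((ss a k - r1 a k)*(ss a k - r2 a k)))⁻¹ ≤ G a k t := by
  have h := intervalIntegral.integral_mono_on (μ := MeasureTheory.volume) ht
    (continuous_const.intervalIntegrable 0 t)
    ((Fcinv_cont ha hk).intervalIntegrable 0 t)
    (fun x _ => Fcinv_ge ha hk x)
  simpa [G] using h

lemma G_le' (t : ℝ) (ht : t ≤ 0) :
    G a k t ≤ t * (Real.sqrt ((ss a k - r1 a k)*(ss a k - r2 a k)))⁻¹ := by
  have h := intervalIntegral.integral_mono_on (μ := MeasureTheory.volume) ht
    (continuous_const.intervalIntegrable t 0)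
    ((Fcinv_cont ha hk).intervalIntegrable t 0)
    (fun x _ => Fcinv_ge ha hk x)
  have h2 : G a k t = -∫ x in t..(0:ℝ), (Fc a k x)⁻¹ := by
    rw [← intervalIntegral.integral_symm]
    rfl
  rw [h2]
  simp only [intervalIntegral.integral_const, smul_eq_mul, sub_zero, zero_sub] at h ⊢
  linarith

lemma G_surj : Function.Surjective (G a k) := by
  have hbpos : 0 < Real.sqrt ((ss a k - r1 a k)*(ss a k - r2 a k)) :=
    Real.sqrt_pos.2 (b2pos ha hk)
  set b := Real.sqrt ((ss a k - r1 a k)*(ss a k - r2 a k)) with hb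
  intro y
  rcases le_or_gt 0 y with hy | hy
  · have h1 : (0:ℝ) ≤ b*(y+1) := by positivity
    have h2 : y ≤ G a k (b*(y+1)) := by
      have h4 := G_ge ha hk (b*(y+1)) h1
      have e : (b*(y+1))*b⁻¹ = y + 1 := by field_simp
      rw [e] at h4
      linarith
    have h3 : y ∈ Set.Icc (G a k 0) (G a k (b*(y+1))) := by
      rw [G_zero ha hk]; exact ⟨hy, h2⟩
    obtain ⟨x, _, hx⟩ := intermediate_value_Icc h1 (G_cont ha hk).continuousOn h3
    exact ⟨x, hx⟩
  · have h1 : b*(y-1) ≤ 0 := by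
      apply mul_nonpos_of_nonneg_of_nonpos hbpos.le; linarith
    have h2 : G a k (b*(y-1)) ≤ y := by
      have h4 := G_le' ha hk (b*(y-1)) h1
      have e : (b*(y-1))*b⁻¹ = y - 1 := by field_simp
      rw [e] at h4
      linarith
    have h3 : y ∈ Set.Icc (G a k (b*(y-1))) (G a k 0) := by
      rw [G_zero ha hk]; exact ⟨h2, hy.le⟩
    obtain ⟨x, _, hx⟩ := intermediate_value_Icc h1 (G_cont ha hk).continuousOn h3
    exact ⟨x, hx⟩

lemma Fc_per : Fc a k (x + 2*π) = Fc a k x := by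
  unfold Fc u
  rw [Real.cos_add_two_pi]

lemma G_add : G a k (x + 2*π) = G a k x + G a k (2*π) := by
  have hint : ∀ p q : ℝ, IntervalIntegrable (fun y => (Fc a k y)⁻¹) MeasureTheory.volume p q :=
    fun p q => (Fcinv_cont ha hk).intervalIntegrable p q
  have h1 : G a k (2*π) + ∫ y in (2*π)..(x + 2*π), (Fc a k y)⁻¹ = G a k (x + 2*π) :=
    intervalIntegral.integral_add_adjacent_intervals (hint 0 (2*π)) (hint (2*π) (x+2*π))
  have h2 : (∫ y in (0:ℝ)..x, (Fc a k (y + 2*π))⁻¹)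
      = ∫ y in (0+2*π)..(x + 2*π), (Fc a k y)⁻¹ :=
    intervalIntegral.integral_comp_add_right (fun y => (Fc a k y)⁻¹) (2*π)
  have h3 : (∫ y in (0:ℝ)..x, (Fc a k (y + 2*π))⁻¹) = G a k x := by
    unfold G
    congr 1
    funext y
    rw [Fc_per ha hk y]
  rw [h3, zero_add] at h2
  rw [← h1, ← h2]
  ring

lemma G_T0_pos : 0 < G a k (2*π) := by
  apply intervalIntegral.intervalIntegral_pos_of_pos
    ((Fcinv_cont ha hk).intervalIntegrable 0 (2*π))
    (fun y => inv_pos.2 (hFpos ha hk y)) Real.two_pi_pos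

lemma u_per : u a k (x + 2*(2*π)) = u a k x := by
  unfold u
  rw [show x + 2*(2*π) = x + 2*π + 2*π by ring, Real.cos_add_two_pi, Real.cos_add_two_pi]

lemma A_per : A a k (x + 2*(2*π)) = A a k x := by
  unfold A; rw [u_per ha hk x]

lemma B_per : B a k (x + 2*(2*π)) = B a k x := by
  unfold B; rw [u_per ha hk x]

end analysis

include ha hk in
lemma fef_main : FefSol a k := by
  classical
  have hmono := G_mono ha hk
  have hsurj := G_surj ha hk
  set e := StrictMono.orderIsoOfSurjective (G a k) hmono hsurj with he
  set φ : ℝ → ℝ := fun t => e.symm t with hφdef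
  have hGφ : ∀ t, G a k (φ t) = t := fun t =>
    StrictMono.orderIsoOfSurjective_self_symm_apply (G a k) hmono hsurj t
  have hφG : ∀ x, φ (G a k x) = x := fun x => hmono.injective (hGφ (G a k x))
  have hφcont : Continuous φ := e.symm.continuous
  have hφd : ∀ t, HasDerivAt φ (Fc a k (φ t)) t := by
    intro t
    have h := HasDerivAt.of_local_left_inverse hφcont.continuousAt
      (G_hasDeriv ha hk (φ t)) (inv_ne_zero (hFpos ha hk (φ t)).ne')
      (Filter.Eventually.of_forall hGφ)
    rwa [inv_inv] at h
  have hφ0 : φ 0 = 0 := by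
    have h := hφG 0; rwa [G_zero ha hk] at h
  have hT0 := G_T0_pos ha hk
  have hφper : ∀ t, φ (t + G a k (2*π)) = φ t + 2*π := by
    intro t
    apply hmono.injective
    show G a k _ = G a k _
    rw [hGφ, G_add ha hk (φ t), hGφ]
  have hφper2 : ∀ t, φ (t + 2*G a k (2*π)) = φ t + 2*(2*π) := by
    intro t
    rw [show t + 2*G a k (2*π) = t + G a k (2*π) + G a k (2*π) by ring, hφper, hφper]
    ring
  refine ⟨fun t => -(Real.sin (φ t/2) * A a k (φ t)),
      fun t => Real.cos (φ t/2) * B a k (φ t),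
      fun t => u a k (φ t), 2*G a k (2*π), by linarith, ?_, ?_, ?_, ?_, ?_, ?_, ?_⟩
  · intro t
    have h := (df1 ha hk (φ t)).comp t (hφd t)
    rw [c1 ha hk (φ t)] at h
    exact h
  · intro t
    have h := (df2 ha hk (φ t)).comp t (hφd t)
    rw [c2 ha hk (φ t)] at h
    exact h
  · intro t
    have h := (dU ha hk (φ t)).comp t (hφd t)
    rw [c3 ha hk (φ t)] at h
    exact h
  · refine ⟨0, G a k π, ?_⟩
    intro h
    simp only [Prod.mk.injEq] at h
    obtain ⟨-, -, h3⟩ := h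
    rw [hφ0, hφG π] at h3
    have e1 : u a k 0 = m a k - d a k := by
      show m a k - d a k * Real.cos 0 = _
      rw [Real.cos_zero]; ring
    have e2 : u a k π = m a k + d a k := by
      show m a k - d a k * Real.cos π = _
      rw [Real.cos_pi]; ring
    have := hd0 ha hk
    rw [e1, e2] at h3
    linarith
  · intro t
    refine ⟨?_, ?_, ?_⟩
    · show -(Real.sin (φ (t + 2*G a k (2*π))/2) * A a k (φ (t + 2*G a k (2*π)))) = _
      rw [hφper2 t, show (φ t + 2*(2*π))/2 = φ t/2 + 2*π by ring,
        Real.sin_add_two_pi, A_per ha hk]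
    · show Real.cos (φ (t + 2*G a k (2*π))/2) * B a k (φ (t + 2*G a k (2*π))) = _
      rw [hφper2 t, show (φ t + 2*(2*π))/2 = φ t/2 + 2*π by ring,
        Real.cos_add_two_pi, B_per ha hk]
    · show u a k (φ (t + 2*G a k (2*π))) = _
      rw [hφper2 t, u_per ha hk]
  · intro t
    exact c4 ha hk (φ t)
  · intro t
    exact c5 ha hk (φ t)

lemma fef_one (k : ℝ) (hk : (9:ℝ)/64 * (1 + 1/1) ^ 2 < k) : FefSol 1 k := by
  have hk' : (9:ℝ)/16 < k := by norm_num at hk; linarith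
  set w := Real.sqrt k with hwdef
  have hkpos : (0:ℝ) < k := by linarith
  have hw2 : w^2 = k := Real.sq_sqrt hkpos.le
  have hw34 : 3/4 < w := by
    rw [hwdef, show (3:ℝ)/4 = Real.sqrt ((3/4)^2) by rw [Real.sqrt_sq]; norm_num]
    apply Real.sqrt_lt_sqrt (by positivity)
    nlinarith
  have hwpos : 0 < w := by linarith
  set ρ := Real.sqrt (3*w - 9/4) with hρdef
  have hρ2 : ρ^2 = 3*w - 9/4 := Real.sq_sqrt (by linarith)
  have hρpos : 0 < ρ := Real.sqrt_pos.2 (by linarith)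
  refine ⟨fun t => ρ * Real.cos (w*t), fun t => ρ * Real.sin (w*t),
      fun _ => w - 3/2, 2*π/w, by positivity, ?_, ?_, ?_, ?_, ?_, ?_, ?_⟩
  · intro t
    have h := ((Real.hasDerivAt_cos (w*t)).comp t
      ((hasDerivAt_id t).const_mul w)).const_mul ρ
    exact h.congr_deriv (by ring)
  · intro t
    have h := ((Real.hasDerivAt_sin (w*t)).comp t
      ((hasDerivAt_id t).const_mul w)).const_mul ρ
    exact h.congr_deriv (by ring)
  · intro t
    have h := hasDerivAt_const t (w - 3/2)
    exact h.congr_deriv (by ring)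
  · refine ⟨0, π/w, ?_⟩
    intro h
    simp only [Prod.mk.injEq] at h
    obtain ⟨h1, -, -⟩ := h
    rw [mul_zero, Real.cos_zero, mul_one, show w*(π/w) = π by field_simp,
      Real.cos_pi] at h1
    nlinarith
  · intro t
    have e : ∀ s : ℝ, w*(s + 2*π/w) = w*s + 2*π := by
      intro s; field_simp
    refine ⟨?_, ?_, rfl⟩
    · show ρ * Real.cos (w*(t + 2*π/w)) = _
      rw [e t, Real.cos_add_two_pi]
    · show ρ * Real.sin (w*(t + 2*π/w)) = _
      rw [e t, Real.sin_add_two_pi]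
  · intro t
    have htr := Real.sin_sq_add_cos_sq (w*t)
    linear_combination (ρ^2/2)*htr + (1/2)*hρ2
  · intro t
    have htr := Real.sin_sq_add_cos_sq (w*t)
    linear_combination (ρ^2)*htr + hρ2 + hw2

lemma fef_symm (a k : ℝ) (ha : 0 < a) (h : FefSol (1/a) k) : FefSol a k := by
  obtain ⟨N₁, N₂, N₃, T, hT, hd1, hd2, hd3, hnc, hper, hH, hK⟩ := h
  refine ⟨fun t => N₂ (-t), fun t => N₁ (-t), fun t => N₃ (-t), T, hT,
    ?_, ?_, ?_, ?_, ?_, ?_, ?_⟩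
  · intro t
    have hh := (hd2 (-t)).comp t (hasDerivAt_neg t)
    exact hh.congr_deriv (by ring)
  · intro t
    have hh := (hd1 (-t)).comp t (hasDerivAt_neg t)
    exact hh.congr_deriv (by rw [one_div, div_inv_eq_mul]; ring)
  · intro t
    have hh := (hd3 (-t)).comp t (hasDerivAt_neg t)
    exact hh.congr_deriv (by rw [one_div_one_div]; ring)
  · obtain ⟨t, s, hts⟩ := hnc
    refine ⟨-t, -s, ?_⟩
    simp only [neg_neg]
    intro hcon
    apply hts
    simp only [Prod.mk.injEq] at hcon ⊢
    tauto
  · intro t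
    obtain ⟨p1, p2, p3⟩ := hper (-t - T)
    have e : -t - T + T = -t := by ring
    rw [e] at p1 p2 p3
    have e2 : -(t + T) = -t - T := by ring
    refine ⟨?_, ?_, ?_⟩
    · show N₂ (-(t + T)) = N₂ (-t)
      rw [e2]; exact p2.symm
    · show N₁ (-(t + T)) = N₁ (-t)
      rw [e2]; exact p1.symm
    · show N₃ (-(t + T)) = N₃ (-t)
      rw [e2]; exact p3.symm
  · intro t
    have hh := hH (-t)
    rw [one_div_one_div] at hh
    linarith
  · intro t
    have hh := hK (-t)
    linarith

end Fef
end

/-- For `1/√3 < a < √3` and any `k > (9/64)(a + 1/a)²` (the value of the Casimir `K` at the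
unique equilibrium on the light cone), there is a nonconstant periodic light-like solution
of the reduced Fefferman equations with `P = 1` lying on the level set `K = k`. -/
theorem periodic_orbit_exists (a : ℝ)
    (ha₁ : 1 / Real.sqrt 3 < a) (ha₂ : a < Real.sqrt 3)
    (k : ℝ) (hk : (9/64) * (a + 1/a) ^ 2 < k) :
    ∃ (M₁ M₂ M₃ : ℝ → ℝ) (T : ℝ), 0 < T ∧
      (∀ t, HasDerivAt M₁ (-(M₂ t) * (M₃ t / a + 3/2)) t) ∧
      (∀ t, HasDerivAt M₂ (M₁ t * (a * M₃ t + 3/2)) t) ∧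
      (∀ t, HasDerivAt M₃ ((1/a - a) * M₁ t * M₂ t) t) ∧
      (∃ t s : ℝ, (M₁ t, M₂ t, M₃ t) ≠ (M₁ s, M₂ s, M₃ s)) ∧
      (∀ t, M₁ (t + T) = M₁ t ∧ M₂ (t + T) = M₂ t ∧ M₃ (t + T) = M₃ t) ∧
      (∀ t, (1/2) * (a * M₁ t ^ 2 + (1/a) * M₂ t ^ 2 - 3 * M₃ t
        - (9/8) * (a + 1/a)) = 0) ∧
      (∀ t, M₁ t ^ 2 + M₂ t ^ 2 + M₃ t ^ 2 = k) := by
  have h3 : (0:ℝ) < Real.sqrt 3 := by positivity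
  have hapos : 0 < a := lt_trans (by positivity) ha₁
  rcases lt_trichotomy a 1 with hlt | heq | hgt
  · have h1a : 1 < 1/a := by
      rw [lt_div_iff₀ hapos]; linarith
    have hk' : (9/64) * (1/a + 1/(1/a)) ^ 2 < k := by
      have e : (9:ℝ)/64 * (1/a + 1/(1/a))^2 = (9/64) * (a + 1/a)^2 := by
        rw [one_div_one_div]; ring
      rw [e]; exact hk
    exact Fef.fef_symm a k hapos (Fef.fef_main h1a hk')
  · subst heq
    exact Fef.fef_one k hk
  · exact Fef.fef_main hgt hk
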